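/- Let O be a discrete valuation ring with maximal ideal m and finite residue field k = O/m, let O₂ = O/m², κ₀ : O₂ → k the quotient map, κ : GLₙ(O₂) → GLₙ(k) the induced reduction homomorphism, and K = ker κ. Fix a nontrivial character ψ : (k,+) → ℂˣ, a generator π of the ideal m·O₂ of O₂, and a section s : k → O₂ of κ₀ with s(0) = 0 and s(1) = 1 extended entrywise to 𝔰 : Mₙ(k) → Mₙ(O₂). Let A ∈ Mₙ(k) be a split matrix in Jordan canonical form: the block diagonal matrix with blocks Aᵢ = aᵢ·I + (block diagonal of principal nilpotent matrices), with a₁, …, a_l pairwise distinct in k. Then the stabilizer T(ψ_A) of the character ψ_A of K equals the product set K · Z_{GLₙ(O₂)}(𝔰(A)), i.e. every element of T(ψ_A) is a product x·y with x ∈ K and y ∈ GLₙ(O₂) commuting with 𝔰(A), and conversely every such product lies in T(ψ_A). -/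

import Mathlib

open Matrix

/-- The `s × s` principal nilpotent matrix: `1`s on the superdiagonal, `0` elsewhere. -/
def principalNilpotent (R : Type*) [Zero R] [One R] (s : ℕ) :
    Matrix (Fin s) (Fin s) R :=
  Matrix.of fun i j => if (i : ℕ) + 1 = (j : ℕ) then 1 else 0

/-- Index type for a matrix in Jordan canonical form with eigenvalue blocks of sizes
`lam i j` (block `j` of eigenvalue `i`). -/
abbrev JIdx (l : ℕ) (c : Fin l → ℕ) (lam : (i : Fin l) → Fin (c i) → ℕ) : Type :=
  (i : Fin l) × ((j : Fin (c i)) × Fin (lam i j))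

/-- The reduction map `O/m² → O/m = k`. -/
noncomputable def redRes (O : Type) [CommRing O] [IsLocalRing O] :
    O ⧸ (IsLocalRing.maximalIdeal O ^ 2) →+* IsLocalRing.ResidueField O :=
  Ideal.Quotient.factor (S := IsLocalRing.maximalIdeal O ^ 2) (T := IsLocalRing.maximalIdeal O)
    (Ideal.pow_le_self two_ne_zero)

/-- The reduction homomorphism `κ : GL_ι(O/m²) → GL_ι(k)`. -/
noncomputable def redGL (O : Type) [CommRing O] [IsLocalRing O]
    (ι : Type) [Fintype ι] [DecidableEq ι] :
    GL ι (O ⧸ (IsLocalRing.maximalIdeal O ^ 2)) →* GL ι (IsLocalRing.ResidueField O) :=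
  Matrix.GeneralLinearGroup.map (redRes O)

/-- The stabilizer `T(θ)` of a character `θ` of a normal subgroup `N` under the
conjugation action of `G`. -/
def charStabilizer {G : Type*} [Group G] (N : Subgroup G) [hN : N.Normal]
    (θ : ↥N →* ℂˣ) : Subgroup G where
  carrier := {g : G | ∀ (x : G) (hx : x ∈ N),
    θ ⟨g * x * g⁻¹, hN.conj_mem x hx g⟩ = θ ⟨x, hx⟩}
  one_mem' := by intro x hx; simp
  mul_mem' := by
    intro a b ha hb x hx
    have h2 := ha (b * x * b⁻¹) (hN.conj_mem x hx b)
    rw [hb x hx] at h2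
    rw [← h2]
    exact congrArg θ (Subtype.ext (by group))
  inv_mem' := by
    intro a ha x hx
    have h := ha (a⁻¹ * x * a⁻¹⁻¹) (hN.conj_mem x hx a⁻¹)
    rw [← h]
    exact congrArg θ (Subtype.ext (by group))

section Jnil

variable {l : ℕ} {c : Fin l → ℕ} {lam : (i : Fin l) → Fin (c i) → ℕ}

theorem JIdx.ext3 {r t : JIdx l c lam} (h1 : r.1 = t.1) (h2 : (r.2.1 : ℕ) = (t.2.1 : ℕ))
    (h3 : (r.2.2 : ℕ) = (t.2.2 : ℕ)) : r = t := by
  obtain ⟨i, j, p⟩ := r; obtain ⟨i', j', p'⟩ := t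
  dsimp at h1 h2 h3
  subst h1
  have hj : j = j' := Fin.ext h2
  subst hj
  have hp : p = p' := Fin.ext h3
  subst hp
  rfl

theorem JIdx.eq_iff {r t : JIdx l c lam} :
    r = t ↔ r.1 = t.1 ∧ (r.2.1 : ℕ) = (t.2.1 : ℕ) ∧ (r.2.2 : ℕ) = (t.2.2 : ℕ) :=
  ⟨by rintro rfl; exact ⟨rfl, rfl, rfl⟩, fun ⟨h1, h2, h3⟩ => JIdx.ext3 h1 h2 h3⟩

theorem JIdx.lam_congr {r t : JIdx l c lam} (h1 : r.1 = t.1) (h2 : (r.2.1 : ℕ) = (t.2.1 : ℕ)) :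
    lam r.1 r.2.1 = lam t.1 t.2.1 := by
  obtain ⟨i, j, p⟩ := r; obtain ⟨i', j', p'⟩ := t
  dsimp at h1 h2 ⊢
  subst h1
  rw [Fin.ext h2]

/-- The nilpotent part (block diagonal of principal nilpotents), as an explicit matrix. -/
def Jnil (R : Type*) [Zero R] [One R] (l : ℕ) (c : Fin l → ℕ)
    (lam : (i : Fin l) → Fin (c i) → ℕ) : Matrix (JIdx l c lam) (JIdx l c lam) R :=
  Matrix.of fun r t =>
    if r.1 = t.1 ∧ (r.2.1 : ℕ) = (t.2.1 : ℕ) ∧ (r.2.2 : ℕ) + 1 = (t.2.2 : ℕ) then 1 else 0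

def predJ (t : JIdx l c lam) (h : 1 ≤ (t.2.2 : ℕ)) : JIdx l c lam :=
  ⟨t.1, t.2.1, ⟨(t.2.2 : ℕ) - 1, lt_of_le_of_lt (Nat.sub_le _ _) t.2.2.isLt⟩⟩

def succJ (r : JIdx l c lam) (h : (r.2.2 : ℕ) + 1 < lam r.1 r.2.1) : JIdx l c lam :=
  ⟨r.1, r.2.1, ⟨(r.2.2 : ℕ) + 1, h⟩⟩

variable {R : Type*}

theorem Jnil_eq_pred [Zero R] [One R] (r t : JIdx l c lam) :
    Jnil R l c lam r t = if h : 1 ≤ (t.2.2 : ℕ) then (if r = predJ t h then 1 else 0) else 0 := by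
  by_cases h : 1 ≤ (t.2.2 : ℕ)
  · rw [dif_pos h]
    refine if_congr ?_ rfl rfl
    constructor
    · rintro ⟨h1, h2, h3⟩
      exact JIdx.ext3 h1 h2 (by simp [predJ]; omega)
    · rintro rfl
      exact ⟨rfl, rfl, by simp [predJ]; omega⟩
  · rw [dif_neg h]
    simp only [Jnil, of_apply]
    rw [if_neg]
    rintro ⟨h1, h2, h3⟩
    omega

theorem Jnil_eq_succ [Zero R] [One R] (r t : JIdx l c lam) :
    Jnil R l c lam r t =
      if h : (r.2.2 : ℕ) + 1 < lam r.1 r.2.1 then (if t = succJ r h then 1 else 0) else 0 := by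
  by_cases h : (r.2.2 : ℕ) + 1 < lam r.1 r.2.1
  · rw [dif_pos h]
    refine if_congr ?_ rfl rfl
    constructor
    · rintro ⟨h1, h2, h3⟩
      exact JIdx.ext3 h1.symm h2.symm (by simp [succJ]; omega)
    · rintro rfl
      exact ⟨rfl, rfl, rfl⟩
  · rw [dif_neg h]
    simp only [Jnil, of_apply]
    rw [if_neg]
    rintro ⟨h1, h2, h3⟩
    have := JIdx.lam_congr h1 h2
    have := t.2.2.isLt
    omega

theorem mul_jnil [NonAssocSemiring R] (M : Matrix (JIdx l c lam) (JIdx l c lam) R)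
    (r t : JIdx l c lam) :
    (M * Jnil R l c lam) r t = if h : 1 ≤ (t.2.2 : ℕ) then M r (predJ t h) else 0 := by
  rw [mul_apply]
  by_cases h : 1 ≤ (t.2.2 : ℕ)
  · rw [dif_pos h]
    rw [Finset.sum_congr rfl (fun u _ => by rw [Jnil_eq_pred, dif_pos h])]
    simp [mul_ite]
  · rw [dif_neg h]
    apply Finset.sum_eq_zero
    intro u _
    rw [Jnil_eq_pred, dif_neg h, mul_zero]

theorem jnil_mul [NonAssocSemiring R] (M : Matrix (JIdx l c lam) (JIdx l c lam) R)
    (r t : JIdx l c lam) :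
    (Jnil R l c lam * M) r t =
      if h : (r.2.2 : ℕ) + 1 < lam r.1 r.2.1 then M (succJ r h) t else 0 := by
  rw [mul_apply]
  by_cases h : (r.2.2 : ℕ) + 1 < lam r.1 r.2.1
  · rw [dif_pos h]
    rw [Finset.sum_congr rfl (fun u _ => by rw [Jnil_eq_succ, dif_pos h])]
    simp [ite_mul]
  · rw [dif_neg h]
    apply Finset.sum_eq_zero
    intro u _
    rw [Jnil_eq_succ, dif_neg h, zero_mul]

theorem jnil_map {S : Type*} [Zero R] [One R] [Zero S] [One S] (f : R → S)
    (h0 : f 0 = 0) (h1 : f 1 = 1) :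
    (Jnil R l c lam).map f = Jnil S l c lam := by
  ext r t
  simp only [Jnil, map_apply, of_apply, apply_ite f, h0, h1]

end Jnil

section Structure

variable {l : ℕ} {c : Fin l → ℕ} {lam : (i : Fin l) → Fin (c i) → ℕ}
variable {K : Type*} [CommRing K]

theorem jordan_structure (a : Fin l → K) :
    (Matrix.blockDiagonal' (fun i =>
      a i • (1 : Matrix ((j : Fin (c i)) × Fin (lam i j)) ((j : Fin (c i)) × Fin (lam i j)) K) +
        Matrix.blockDiagonal' (fun j => principalNilpotent K (lam i j)))) =
    Matrix.diagonal (fun r : JIdx l c lam => a r.1) + Jnil K l c lam := by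
  ext r t
  obtain ⟨i, j, p⟩ := r; obtain ⟨i', j', p'⟩ := t
  rw [Matrix.add_apply, diagonal_apply]
  simp only [Jnil, of_apply]
  by_cases hi : i = i'
  · subst hi
    rw [blockDiagonal'_apply_eq, Matrix.add_apply, Matrix.smul_apply, one_apply]
    by_cases hj : j = j'
    · subst hj
      rw [blockDiagonal'_apply_eq]
      simp only [principalNilpotent, of_apply, Sigma.mk.inj_iff, heq_eq_eq, true_and]
      by_cases hp : p = p'
      · subst hp
        simp [if_neg (show ¬((p:ℕ) + 1 = (p:ℕ)) by omega)]
      · have hpv : ¬ ((p:ℕ) = (p':ℕ)) := fun h => hp (Fin.ext h)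
        simp [hp, hpv]
    · have hjv : ¬ ((j : ℕ) = (j' : ℕ)) := fun h => hj (Fin.ext h)
      rw [blockDiagonal'_apply_ne _ _ _ hj]
      simp [Sigma.mk.inj_iff, hj, hjv]
  · rw [blockDiagonal'_apply_ne _ _ _ hi]
    simp [Sigma.mk.inj_iff, hi]

end Structure

section Crux

variable {l : ℕ} {c : Fin l → ℕ} {lam : (i : Fin l) → Fin (c i) → ℕ}
variable {K R : Type*} [Field K] [CommRing R]

theorem diag_add_jnil_map (d : JIdx l c lam → K) (s : K → R) (hs0 : s 0 = 0) (hs1 : s 1 = 1) :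
    (Matrix.diagonal d + Jnil K l c lam).map s =
      Matrix.diagonal (fun r => s (d r)) + Jnil R l c lam := by
  ext r t
  rw [map_apply, Matrix.add_apply, Matrix.add_apply, diagonal_apply, diagonal_apply]
  simp only [Jnil, of_apply]
  by_cases h : r = t
  · subst h
    rw [if_pos rfl, if_pos rfl, if_neg (fun hh => by omega), if_neg (fun hh => by omega),
      add_zero, add_zero]
  · rw [if_neg h, if_neg h, zero_add, zero_add]
    split_ifs with hc
    · exact hs1
    · exact hs0

/-- The commutation relation, entrywise. -/
theorem comm_entrywise (a : Fin l → K) (G : Matrix (JIdx l c lam) (JIdx l c lam) K)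
    (hG : G * (Matrix.diagonal (fun r : JIdx l c lam => a r.1) + Jnil K l c lam) =
      (Matrix.diagonal (fun r : JIdx l c lam => a r.1) + Jnil K l c lam) * G)
    (r t : JIdx l c lam) :
    G r t * a t.1 + (if h : 1 ≤ (t.2.2 : ℕ) then G r (predJ t h) else 0) =
      a r.1 * G r t +
        (if h : (r.2.2 : ℕ) + 1 < lam r.1 r.2.1 then G (succJ r h) t else 0) := by
  have h := Matrix.ext_iff.mpr hG r t
  have h' : (G * Matrix.diagonal (fun r : JIdx l c lam => a r.1)) r t
      + (G * Jnil K l c lam) r t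
      = (Matrix.diagonal (fun r : JIdx l c lam => a r.1) * G) r t
      + (Jnil K l c lam * G) r t := by
    rw [← Matrix.add_apply, ← Matrix.add_apply, ← mul_add, ← add_mul]
    exact h
  rwa [mul_diagonal, diagonal_mul, mul_jnil, jnil_mul] at h'

/-- Sylvester-type vanishing: entries of `G` in blocks with distinct eigenvalues vanish. -/
theorem sylvester_vanish (a : Fin l → K) (ha : Function.Injective a)
    (G : Matrix (JIdx l c lam) (JIdx l c lam) K)
    (hG : G * (Matrix.diagonal (fun r : JIdx l c lam => a r.1) + Jnil K l c lam) =
      (Matrix.diagonal (fun r : JIdx l c lam => a r.1) + Jnil K l c lam) * G) :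
    ∀ (n : ℕ) (r t : JIdx l c lam), r.1 ≠ t.1 →
      (lam r.1 r.2.1 - 1 - (r.2.2 : ℕ)) + (t.2.2 : ℕ) ≤ n → G r t = 0 := by
  intro n
  induction n with
  | zero =>
    intro r t hne hm
    have hr := r.2.2.isLt
    have H := comm_entrywise a G hG r t
    rw [dif_neg (by omega), dif_neg (by omega), add_zero, add_zero] at H
    have hsub : (a t.1 - a r.1) * G r t = 0 := by ring_nf; linear_combination H
    rcases mul_eq_zero.mp hsub with h | h
    · exact absurd (ha (sub_eq_zero.mp h)) (Ne.symm hne)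
    · exact h
  | succ n ih =>
    intro r t hne hm
    have hr := r.2.2.isLt
    have H := comm_entrywise a G hG r t
    have e1 : (if h : 1 ≤ (t.2.2 : ℕ) then G r (predJ t h) else 0) = 0 := by
      split
      case isTrue h =>
        exact ih r (predJ t h) hne (by simp [predJ]; omega)
      case isFalse h => rfl
    have e2 : (if h : (r.2.2 : ℕ) + 1 < lam r.1 r.2.1 then G (succJ r h) t else 0) = 0 := by
      split
      case isTrue h =>
        exact ih (succJ r h) t hne (by simp [succJ]; omega)
      case isFalse h => rfl
    rw [e1, e2, add_zero, add_zero] at H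
    have hsub : (a t.1 - a r.1) * G r t = 0 := by ring_nf; linear_combination H
    rcases mul_eq_zero.mp hsub with h | h
    · exact absurd (ha (sub_eq_zero.mp h)) (Ne.symm hne)
    · exact h

/-- The main lifting lemma: if `G` commutes with the Jordan matrix over the field `K`,
then the entrywise lift `G.map s` commutes with the corresponding matrix over `R`. -/
theorem crux (s : K → R) (hs0 : s 0 = 0) (a : Fin l → K) (ha : Function.Injective a)
    (G : Matrix (JIdx l c lam) (JIdx l c lam) K)
    (hG : G * (Matrix.diagonal (fun r : JIdx l c lam => a r.1) + Jnil K l c lam) =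
      (Matrix.diagonal (fun r : JIdx l c lam => a r.1) + Jnil K l c lam) * G) :
    (G.map s) * (Matrix.diagonal (fun r : JIdx l c lam => s (a r.1)) + Jnil R l c lam) =
      (Matrix.diagonal (fun r : JIdx l c lam => s (a r.1)) + Jnil R l c lam) * (G.map s) := by
  ext r t
  rw [mul_add, add_mul, Matrix.add_apply, Matrix.add_apply, mul_diagonal, diagonal_mul, mul_jnil, jnil_mul]
  have epred : (if h : 1 ≤ (t.2.2 : ℕ) then (G.map s) r (predJ t h) else 0) =
      s (if h : 1 ≤ (t.2.2 : ℕ) then G r (predJ t h) else 0) := by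
    rw [apply_dite s]
    simp [hs0, map_apply]
  have esucc : (if h : (r.2.2 : ℕ) + 1 < lam r.1 r.2.1 then (G.map s) (succJ r h) t else 0) =
      s (if h : (r.2.2 : ℕ) + 1 < lam r.1 r.2.1 then G (succJ r h) t else 0) := by
    rw [apply_dite s]
    simp [hs0, map_apply]
  rw [epred, esucc, map_apply]
  by_cases hi : r.1 = t.1
  · have H := comm_entrywise a G hG r t
    have hP : (if h : 1 ≤ (t.2.2 : ℕ) then G r (predJ t h) else 0) =
        (if h : (r.2.2 : ℕ) + 1 < lam r.1 r.2.1 then G (succJ r h) t else 0) := by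
      have : G r t * a t.1 = a r.1 * G r t := by rw [hi, mul_comm]
      rw [this] at H
      exact add_left_cancel H
    have ha' : s (a r.fst) = s (a t.fst) := by rw [hi]
    rw [hP, ha']
    ring
  · have g0 : G r t = 0 := sylvester_vanish a ha G hG _ r t hi le_rfl
    have hP : (if h : 1 ≤ (t.2.2 : ℕ) then G r (predJ t h) else 0) = 0 := by
      split
      case isTrue h => exact sylvester_vanish a ha G hG _ r (predJ t h) hi le_rfl
      case isFalse h => rfl
    have hQ : (if h : (r.2.2 : ℕ) + 1 < lam r.1 r.2.1 then G (succJ r h) t else 0) = 0 := by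
      split
      case isTrue h => exact sylvester_vanish a ha G hG _ (succJ r h) t hi le_rfl
      case isFalse h => rfl
    rw [g0, hP, hQ, hs0]
    ring

end Crux

section RingAux

variable (O : Type) [CommRing O] [IsLocalRing O]

theorem redRes_mk (x : O) :
    redRes O (Ideal.Quotient.mk _ x) = Ideal.Quotient.mk (IsLocalRing.maximalIdeal O) x :=
  Ideal.Quotient.factor_mk _ _

theorem redRes_zero_iff (π : O ⧸ (IsLocalRing.maximalIdeal O ^ 2))
    (hπ : Ideal.span {π} =
      Ideal.map (Ideal.Quotient.mk (IsLocalRing.maximalIdeal O ^ 2))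
        (IsLocalRing.maximalIdeal O))
    (x : O ⧸ (IsLocalRing.maximalIdeal O ^ 2)) :
    redRes O x = 0 ↔ ∃ y, x = π * y := by
  constructor
  · intro hx
    obtain ⟨x', rfl⟩ := Ideal.Quotient.mk_surjective x
    rw [redRes_mk] at hx
    have hx' : x' ∈ IsLocalRing.maximalIdeal O := Ideal.Quotient.eq_zero_iff_mem.mp hx
    have hmem : Ideal.Quotient.mk (IsLocalRing.maximalIdeal O ^ 2) x' ∈
        Ideal.map (Ideal.Quotient.mk (IsLocalRing.maximalIdeal O ^ 2))
          (IsLocalRing.maximalIdeal O) := Ideal.mem_map_of_mem _ hx'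
    rw [← hπ, Ideal.mem_span_singleton'] at hmem
    obtain ⟨y, hy⟩ := hmem
    exact ⟨y, by rw [← hy, mul_comm]⟩
  · rintro ⟨y, rfl⟩
    have hπ0 : redRes O π = 0 := by
      have hmem : π ∈ Ideal.map (Ideal.Quotient.mk (IsLocalRing.maximalIdeal O ^ 2))
          (IsLocalRing.maximalIdeal O) := by
        rw [← hπ]; exact Ideal.mem_span_singleton_self π
      obtain ⟨x', hx', hxx⟩ :=
        (Ideal.mem_map_iff_of_surjective _ Ideal.Quotient.mk_surjective).mp hmem
      rw [← hxx, redRes_mk]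
      exact Ideal.Quotient.eq_zero_iff_mem.mpr hx'
    rw [_root_.map_mul, hπ0, zero_mul]

theorem isUnit_of_redRes_ne_zero {x : O ⧸ (IsLocalRing.maximalIdeal O ^ 2)}
    (hx : redRes O x ≠ 0) : IsUnit x := by
  obtain ⟨x', rfl⟩ := Ideal.Quotient.mk_surjective x
  rw [redRes_mk] at hx
  have h : x' ∉ IsLocalRing.maximalIdeal O := fun hm =>
    hx (Ideal.Quotient.eq_zero_iff_mem.mpr hm)
  exact (IsLocalRing.notMem_maximalIdeal.mp h).map _

theorem isUnit_matrix_of_red {ι : Type} [Fintype ι] [DecidableEq ι]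
    (M : Matrix ι ι (O ⧸ (IsLocalRing.maximalIdeal O ^ 2)))
    (h : IsUnit ((M.map (redRes O)).det)) : IsUnit M := by
  rw [Matrix.isUnit_iff_isUnit_det]
  apply isUnit_of_redRes_ne_zero O
  have hd : redRes O M.det = (M.map (redRes O)).det := by
    rw [RingHom.map_det]; rfl
  rw [hd]
  exact h.ne_zero

end RingAux


theorem mem_charStabilizer_iff {G : Type*} [Group G] (N : Subgroup G) [hN : N.Normal]
    (θ : ↥N →* ℂˣ) (g : G) :
    g ∈ charStabilizer N θ ↔ ∀ (x : G) (hx : x ∈ N),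
      θ ⟨g * x * g⁻¹, hN.conj_mem x hx g⟩ = θ ⟨x, hx⟩ := Iff.rfl

set_option maxHeartbeats 2000000 in
/-- Let `O` be a discrete valuation ring with finite residue field `k`, `O₂ = O/m²`,
`κ` the reduction homomorphism `GL(O₂) → GL(k)` and `K = ker κ`.  Fix a nontrivial
additive character `ψ` of `k`, a generator `π` of `m·O₂`, a section `s` of `O₂ → k`
with `s(0) = 0`, `s(1) = 1` (extended entrywise to `𝔰`), and let `A` be a split matrix
over `k` in Jordan canonical form (block diagonal with blocks
`aᵢ·I + (block diagonal of principal nilpotents)`, the `aᵢ` pairwise distinct).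
Then the stabilizer `T(ψ_A)` of the character `ψ_A` of `K` equals the product set
`K · Z_{GL(O₂)}(𝔰(A))`. -/
theorem charStabilizer_eq_ker_mul_centralizer_section
    (O : Type) [CommRing O] [IsDomain O] [IsDiscreteValuationRing O]
    [Finite (IsLocalRing.ResidueField O)]
    (π : O ⧸ (IsLocalRing.maximalIdeal O ^ 2))
    (hπ : Ideal.span {π} =
      Ideal.map (Ideal.Quotient.mk (IsLocalRing.maximalIdeal O ^ 2))
        (IsLocalRing.maximalIdeal O))
    (ψ : AddChar (IsLocalRing.ResidueField O) ℂˣ) (hψ : ∃ x, ψ x ≠ 1)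
    (s : IsLocalRing.ResidueField O → O ⧸ (IsLocalRing.maximalIdeal O ^ 2))
    (hs : ∀ x, redRes O (s x) = x) (hs0 : s 0 = 0) (hs1 : s 1 = 1)
    (l : ℕ) (a : Fin l → IsLocalRing.ResidueField O) (ha : Function.Injective a)
    (c : Fin l → ℕ) (lam : (i : Fin l) → Fin (c i) → ℕ) (hlam : ∀ i j, 1 ≤ lam i j)
    (A : Matrix (JIdx l c lam) (JIdx l c lam) (IsLocalRing.ResidueField O))
    (hA : A = Matrix.blockDiagonal' (fun i =>
      a i • (1 : Matrix ((j : Fin (c i)) × Fin (lam i j)) ((j : Fin (c i)) × Fin (lam i j))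
          (IsLocalRing.ResidueField O)) +
        Matrix.blockDiagonal' (fun j => principalNilpotent (IsLocalRing.ResidueField O)
          (lam i j))))
    (θ : ↥(redGL O (JIdx l c lam)).ker →* ℂˣ)
    (hθ : ∀ (x : ↥(redGL O (JIdx l c lam)).ker)
        (Y : Matrix (JIdx l c lam) (JIdx l c lam) (O ⧸ (IsLocalRing.maximalIdeal O ^ 2))),
      ((x : GL (JIdx l c lam) (O ⧸ (IsLocalRing.maximalIdeal O ^ 2))) :
          Matrix (JIdx l c lam) (JIdx l c lam) (O ⧸ (IsLocalRing.maximalIdeal O ^ 2))) =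
        1 + π • Y →
      θ x = ψ (Matrix.trace (A * Y.map (redRes O)))) :
    (charStabilizer (redGL O (JIdx l c lam)).ker θ :
        Set (GL (JIdx l c lam) (O ⧸ (IsLocalRing.maximalIdeal O ^ 2)))) =
      {w : GL (JIdx l c lam) (O ⧸ (IsLocalRing.maximalIdeal O ^ 2)) |
        ∃ x ∈ (redGL O (JIdx l c lam)).ker,
          ∃ y : GL (JIdx l c lam) (O ⧸ (IsLocalRing.maximalIdeal O ^ 2)),
            ((↑y : Matrix (JIdx l c lam) (JIdx l c lam)
                (O ⧸ (IsLocalRing.maximalIdeal O ^ 2))) * A.map s =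
              A.map s * (↑y : Matrix (JIdx l c lam) (JIdx l c lam)
                (O ⧸ (IsLocalRing.maximalIdeal O ^ 2)))) ∧
            w = x * y} := by
  classical
  have hker0 : ∀ x : (O ⧸ (IsLocalRing.maximalIdeal O ^ 2)), (redRes O) x = 0 ↔ ∃ y, x = π * y := redRes_zero_iff O π hπ
  have hπ0 : (redRes O) π = 0 := (hker0 π).mpr ⟨1, (mul_one π).symm⟩
  have hcoe : ∀ g : GL (JIdx l c lam) (O ⧸ (IsLocalRing.maximalIdeal O ^ 2)),
      ((redGL O (JIdx l c lam) g : GL (JIdx l c lam) (IsLocalRing.ResidueField O)) : Matrix (JIdx l c lam) (JIdx l c lam) (IsLocalRing.ResidueField O)) = ((g : Matrix (JIdx l c lam) (JIdx l c lam) (O ⧸ (IsLocalRing.maximalIdeal O ^ 2)))).map (redRes O) := fun _ => rfl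
  have hone : ∀ (r t : (JIdx l c lam)), (redRes O) ((1 : Matrix (JIdx l c lam) (JIdx l c lam) (O ⧸ (IsLocalRing.maximalIdeal O ^ 2))) r t) = (1 : Matrix (JIdx l c lam) (JIdx l c lam) (IsLocalRing.ResidueField O)) r t := by
    intro r t
    by_cases h : r = t <;> simp [Matrix.one_apply, h]
  have hKmem : ∀ g : GL (JIdx l c lam) (O ⧸ (IsLocalRing.maximalIdeal O ^ 2)), g ∈ (redGL O (JIdx l c lam)).ker ↔
      ((g : Matrix (JIdx l c lam) (JIdx l c lam) (O ⧸ (IsLocalRing.maximalIdeal O ^ 2))).map (redRes O) = 1) := by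
    intro g
    rw [MonoidHom.mem_ker]
    constructor
    · intro h
      have := congrArg (Units.val) h
      rwa [hcoe g] at this
    · intro h
      exact Units.ext (by rw [hcoe g, h]; rfl)
  have hKform : ∀ g : GL (JIdx l c lam) (O ⧸ (IsLocalRing.maximalIdeal O ^ 2)), g ∈ (redGL O (JIdx l c lam)).ker →
      ∃ Y : Matrix (JIdx l c lam) (JIdx l c lam) (O ⧸ (IsLocalRing.maximalIdeal O ^ 2)), (g : Matrix (JIdx l c lam) (JIdx l c lam) (O ⧸ (IsLocalRing.maximalIdeal O ^ 2))) = 1 + π • Y := by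
    intro g hg
    rw [hKmem g] at hg
    have hent : ∀ r t : (JIdx l c lam), ∃ y, (g : Matrix (JIdx l c lam) (JIdx l c lam) (O ⧸ (IsLocalRing.maximalIdeal O ^ 2))) r t - (1 : Matrix (JIdx l c lam) (JIdx l c lam) (O ⧸ (IsLocalRing.maximalIdeal O ^ 2))) r t = π * y := by
      intro r t
      rw [← hker0, map_sub]
      have h1 : (redRes O) ((g : Matrix (JIdx l c lam) (JIdx l c lam) (O ⧸ (IsLocalRing.maximalIdeal O ^ 2))) r t) = (1 : Matrix (JIdx l c lam) (JIdx l c lam) (IsLocalRing.ResidueField O)) r t := by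
        rw [← Matrix.map_apply (f := (redRes O)), hg]
      rw [h1, hone, sub_self]
    refine ⟨fun r t => Classical.choose (hent r t), ?_⟩
    ext r t
    have := Classical.choose_spec (hent r t)
    rw [Matrix.add_apply]
    change _ = _ + π * Classical.choose (hent r t)
    linear_combination this
  have hKrev : ∀ Y : Matrix (JIdx l c lam) (JIdx l c lam) (O ⧸ (IsLocalRing.maximalIdeal O ^ 2)), ((1 + π • Y : Matrix (JIdx l c lam) (JIdx l c lam) (O ⧸ (IsLocalRing.maximalIdeal O ^ 2))).map (redRes O)) = 1 := by
    intro Y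
    ext r t
    rw [Matrix.map_apply, Matrix.add_apply, Matrix.smul_apply, smul_eq_mul, map_add,
      _root_.map_mul, hπ0, zero_mul, add_zero, hone]
  have hconj : ∀ (w : GL (JIdx l c lam) (O ⧸ (IsLocalRing.maximalIdeal O ^ 2))) (Y : Matrix (JIdx l c lam) (JIdx l c lam) (O ⧸ (IsLocalRing.maximalIdeal O ^ 2))),
      (w : Matrix (JIdx l c lam) (JIdx l c lam) (O ⧸ (IsLocalRing.maximalIdeal O ^ 2))) * (1 + π • Y) * ((w⁻¹ : GL (JIdx l c lam) (O ⧸ (IsLocalRing.maximalIdeal O ^ 2))) : Matrix (JIdx l c lam) (JIdx l c lam) (O ⧸ (IsLocalRing.maximalIdeal O ^ 2))) =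
        1 + π • ((w : Matrix (JIdx l c lam) (JIdx l c lam) (O ⧸ (IsLocalRing.maximalIdeal O ^ 2))) * Y * ((w⁻¹ : GL (JIdx l c lam) (O ⧸ (IsLocalRing.maximalIdeal O ^ 2))) : Matrix (JIdx l c lam) (JIdx l c lam) (O ⧸ (IsLocalRing.maximalIdeal O ^ 2)))) := by
    intro w Y
    have h1 : (w : Matrix (JIdx l c lam) (JIdx l c lam) (O ⧸ (IsLocalRing.maximalIdeal O ^ 2))) * ((w⁻¹ : GL (JIdx l c lam) (O ⧸ (IsLocalRing.maximalIdeal O ^ 2))) : Matrix (JIdx l c lam) (JIdx l c lam) (O ⧸ (IsLocalRing.maximalIdeal O ^ 2))) = 1 := w.mul_inv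
    rw [mul_add, mul_one, add_mul, h1, mul_smul_comm, smul_mul_assoc]
  have hA' : A = Matrix.diagonal (fun r : (JIdx l c lam) => a r.1) + Jnil (IsLocalRing.ResidueField O) l c lam :=
    hA.trans (jordan_structure a)
  have hAs : A.map s = Matrix.diagonal (fun r : (JIdx l c lam) => s (a r.1)) + Jnil (O ⧸ (IsLocalRing.maximalIdeal O ^ 2)) l c lam := by
    rw [hA', diag_add_jnil_map _ s hs0 hs1]
  have hsA : (A.map s).map (redRes O) = A := by
    ext r t
    simp only [Matrix.map_apply]
    rw [hs]
  have hnondeg : ∀ B : Matrix (JIdx l c lam) (JIdx l c lam) (IsLocalRing.ResidueField O), (∀ Z : Matrix (JIdx l c lam) (JIdx l c lam) (IsLocalRing.ResidueField O), ψ (Matrix.trace (B * Z)) = 1) →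
      B = 0 := by
    intro B hB
    ext r t
    rw [Matrix.zero_apply]
    by_contra hrt
    obtain ⟨x0, hx0⟩ := hψ
    apply hx0
    have key : ∀ u : (IsLocalRing.ResidueField O), ψ (B r t * u) = 1 := by
      intro u
      have h := hB (Matrix.single t r u)
      rw [Matrix.trace_mul_comm] at h
      have htr : Matrix.trace (Matrix.single t r u * B) = u * B r t := by
        rw [Matrix.trace]
        rw [Finset.sum_eq_single t]
        · exact Matrix.single_mul_apply_same (c := u) t r t B
        · intro q _ hq
          exact Matrix.single_mul_apply_of_ne (c := u) t r q q hq B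
        · intro hq
          exact absurd (Finset.mem_univ t) hq
      rw [htr, mul_comm] at h
      exact h
    calc ψ x0 = ψ (B r t * ((B r t)⁻¹ * x0)) := by
          rw [← mul_assoc, mul_inv_cancel₀ hrt, one_mul]
      _ = 1 := key _
  ext w
  simp only [Set.mem_setOf_eq, SetLike.mem_coe]
  constructor
  · -- forward: stabilizer ⊆ (IsLocalRing.ResidueField O) · Z(𝔰(A))
    intro hw
    rw [mem_charStabilizer_iff] at hw
    set W : Matrix (JIdx l c lam) (JIdx l c lam) (IsLocalRing.ResidueField O) := ((w : Matrix (JIdx l c lam) (JIdx l c lam) (O ⧸ (IsLocalRing.maximalIdeal O ^ 2)))).map (redRes O) with hWdef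
    set Wi : Matrix (JIdx l c lam) (JIdx l c lam) (IsLocalRing.ResidueField O) := (((w⁻¹ : GL (JIdx l c lam) (O ⧸ (IsLocalRing.maximalIdeal O ^ 2))) : Matrix (JIdx l c lam) (JIdx l c lam) (O ⧸ (IsLocalRing.maximalIdeal O ^ 2)))).map (redRes O) with hWidef
    have hWWi : W * Wi = 1 := by
      rw [hWdef, hWidef, ← Matrix.map_mul, w.mul_inv,
        Matrix.map_one (redRes O) (redRes O).map_zero (redRes O).map_one]
    have hWu : IsUnit W := by
      rw [hWdef, ← hcoe w]
      exact (redGL O (JIdx l c lam) w).isUnit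
    have hstab : ∀ Z : Matrix (JIdx l c lam) (JIdx l c lam) (IsLocalRing.ResidueField O),
        ψ (Matrix.trace ((Wi * A * W) * Z)) = ψ (Matrix.trace (A * Z)) := by
      intro Z
      have hYred : (Z.map s).map (redRes O) = Z := by
        ext r t
        simp only [Matrix.map_apply]
        rw [hs]
      have hM : ((1 + π • Z.map s : Matrix (JIdx l c lam) (JIdx l c lam) (O ⧸ (IsLocalRing.maximalIdeal O ^ 2))).map (redRes O)) = 1 := hKrev _
      have hMunit : IsUnit (1 + π • Z.map s : Matrix (JIdx l c lam) (JIdx l c lam) (O ⧸ (IsLocalRing.maximalIdeal O ^ 2))) :=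
        isUnit_matrix_of_red O _ (by rw [hM, Matrix.det_one]; exact isUnit_one)
      set z : GL (JIdx l c lam) (O ⧸ (IsLocalRing.maximalIdeal O ^ 2)) := hMunit.unit with hzdef
      have hzval : (z : Matrix (JIdx l c lam) (JIdx l c lam) (O ⧸ (IsLocalRing.maximalIdeal O ^ 2))) = 1 + π • Z.map s := hMunit.unit_spec
      have hz : z ∈ (redGL O (JIdx l c lam)).ker := (hKmem z).mpr (by rw [hzval, hM])
      have h1 : θ ⟨z, hz⟩ = ψ (Matrix.trace (A * Z)) := by
        rw [hθ ⟨z, hz⟩ (Z.map s) hzval, hYred]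
      have hcval : ((w * z * w⁻¹ : GL (JIdx l c lam) (O ⧸ (IsLocalRing.maximalIdeal O ^ 2))) : Matrix (JIdx l c lam) (JIdx l c lam) (O ⧸ (IsLocalRing.maximalIdeal O ^ 2))) =
          1 + π • ((w : Matrix (JIdx l c lam) (JIdx l c lam) (O ⧸ (IsLocalRing.maximalIdeal O ^ 2))) * Z.map s * ((w⁻¹ : GL (JIdx l c lam) (O ⧸ (IsLocalRing.maximalIdeal O ^ 2))) : Matrix (JIdx l c lam) (JIdx l c lam) (O ⧸ (IsLocalRing.maximalIdeal O ^ 2)))) := by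
        rw [Units.val_mul, Units.val_mul, hzval]
        exact hconj w (Z.map s)
      have h3 := hθ ⟨w * z * w⁻¹, (MonoidHom.normal_ker _).conj_mem z hz w⟩ _ hcval
      have h4 : ((w : Matrix (JIdx l c lam) (JIdx l c lam) (O ⧸ (IsLocalRing.maximalIdeal O ^ 2))) * Z.map s * ((w⁻¹ : GL (JIdx l c lam) (O ⧸ (IsLocalRing.maximalIdeal O ^ 2))) : Matrix (JIdx l c lam) (JIdx l c lam) (O ⧸ (IsLocalRing.maximalIdeal O ^ 2)))).map (redRes O) =
          W * Z * Wi := by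
        rw [Matrix.map_mul, Matrix.map_mul, hYred]
      have h5 : Matrix.trace (A * (W * Z * Wi)) = Matrix.trace ((Wi * A * W) * Z) := by
        have e1 : A * (W * Z * Wi) = (A * W) * Z * Wi := by
          simp only [mul_assoc]
        rw [e1, Matrix.trace_mul_cycle (A * W) Z Wi, ← mul_assoc Wi A W]
      calc ψ (Matrix.trace ((Wi * A * W) * Z))
          = ψ (Matrix.trace (A * (W * Z * Wi))) := by rw [h5]
        _ = ψ (Matrix.trace (A *
            (((w : Matrix (JIdx l c lam) (JIdx l c lam) (O ⧸ (IsLocalRing.maximalIdeal O ^ 2))) * Z.map s * ((w⁻¹ : GL (JIdx l c lam) (O ⧸ (IsLocalRing.maximalIdeal O ^ 2))) : Matrix (JIdx l c lam) (JIdx l c lam) (O ⧸ (IsLocalRing.maximalIdeal O ^ 2)))).map (redRes O)))) := by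
            rw [h4]
        _ = θ ⟨w * z * w⁻¹, (MonoidHom.normal_ker _).conj_mem z hz w⟩ := h3.symm
        _ = θ ⟨z, hz⟩ := hw z hz
        _ = ψ (Matrix.trace (A * Z)) := h1
    have hB : Wi * A * W - A = 0 := by
      apply hnondeg
      intro Z
      have hu := hstab Z
      have htr : Matrix.trace ((Wi * A * W - A) * Z) =
          Matrix.trace ((Wi * A * W) * Z) - Matrix.trace (A * Z) := by
        rw [sub_mul, Matrix.trace_sub]
      rw [htr]
      have hmul : ψ (Matrix.trace ((Wi * A * W) * Z) - Matrix.trace (A * Z)) *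
          ψ (Matrix.trace (A * Z)) = ψ (Matrix.trace (A * Z)) := by
        rw [← AddChar.map_add_eq_mul, sub_add_cancel, hu]
      exact mul_right_cancel (hmul.trans (one_mul (ψ (Matrix.trace (A * Z)))).symm)
    have hWAW : Wi * A * W = A := sub_eq_zero.mp hB
    have hWA : W * A = A * W := by
      have h7 : W * (Wi * A * W) = W * A := congrArg (W * ·) hWAW
      rw [← mul_assoc, ← mul_assoc, hWWi, one_mul] at h7
      exact h7.symm
    have hG : W * (Matrix.diagonal (fun r : (JIdx l c lam) => a r.1) + Jnil (IsLocalRing.ResidueField O) l c lam) =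
        (Matrix.diagonal (fun r : (JIdx l c lam) => a r.1) + Jnil (IsLocalRing.ResidueField O) l c lam) * W := by
      rw [← hA']; exact hWA
    have hC := crux s hs0 a ha W hG
    have hCred : (W.map s).map (redRes O) = W := by
      ext r t
      simp only [Matrix.map_apply]
      rw [hs]
    have hCunit : IsUnit (W.map s) :=
      isUnit_matrix_of_red O _
        (by rw [hCred]; exact (Matrix.isUnit_iff_isUnit_det W).mp hWu)
    set y : GL (JIdx l c lam) (O ⧸ (IsLocalRing.maximalIdeal O ^ 2)) := hCunit.unit with hydef
    have hyval : (y : Matrix (JIdx l c lam) (JIdx l c lam) (O ⧸ (IsLocalRing.maximalIdeal O ^ 2))) = W.map s := hCunit.unit_spec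
    have hyA : (y : Matrix (JIdx l c lam) (JIdx l c lam) (O ⧸ (IsLocalRing.maximalIdeal O ^ 2))) * A.map s = A.map s * (y : Matrix (JIdx l c lam) (JIdx l c lam) (O ⧸ (IsLocalRing.maximalIdeal O ^ 2))) := by
      rw [hyval, hAs]; exact hC
    have hxker : w * y⁻¹ ∈ (redGL O (JIdx l c lam)).ker := by
      rw [hKmem, Units.val_mul, Matrix.map_mul]
      have h8 : (W.map s) * ((y⁻¹ : GL (JIdx l c lam) (O ⧸ (IsLocalRing.maximalIdeal O ^ 2))) : Matrix (JIdx l c lam) (JIdx l c lam) (O ⧸ (IsLocalRing.maximalIdeal O ^ 2))) = 1 := by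
        rw [← hyval]; exact y.mul_inv
      rw [← hWdef, ← hCred, ← Matrix.map_mul, h8, Matrix.map_one (redRes O) (redRes O).map_zero (redRes O).map_one]
    exact ⟨w * y⁻¹, hxker, y, hyA, (inv_mul_cancel_right w y).symm⟩
  · -- reverse: (IsLocalRing.ResidueField O) · Z(𝔰(A)) ⊆ stabilizer
    rintro ⟨x, hx, y, hy, rfl⟩
    rw [mem_charStabilizer_iff]
    intro z hz
    obtain ⟨Y, hY⟩ := hKform z hz
    set w : GL (JIdx l c lam) (O ⧸ (IsLocalRing.maximalIdeal O ^ 2)) := x * y with hwdef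
    set P : Matrix (JIdx l c lam) (JIdx l c lam) (IsLocalRing.ResidueField O) := ((w : Matrix (JIdx l c lam) (JIdx l c lam) (O ⧸ (IsLocalRing.maximalIdeal O ^ 2)))).map (redRes O) with hPdef
    set Q : Matrix (JIdx l c lam) (JIdx l c lam) (IsLocalRing.ResidueField O) := (((w⁻¹ : GL (JIdx l c lam) (O ⧸ (IsLocalRing.maximalIdeal O ^ 2))) : Matrix (JIdx l c lam) (JIdx l c lam) (O ⧸ (IsLocalRing.maximalIdeal O ^ 2)))).map (redRes O) with hQdef
    have hQP : Q * P = 1 := by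
      rw [hPdef, hQdef, ← Matrix.map_mul, w.inv_mul,
        Matrix.map_one (redRes O) (redRes O).map_zero (redRes O).map_one]
    have hxone : ((x : Matrix (JIdx l c lam) (JIdx l c lam) (O ⧸ (IsLocalRing.maximalIdeal O ^ 2)))).map (redRes O) = 1 := (hKmem x).mp hx
    have hyA : ((y : Matrix (JIdx l c lam) (JIdx l c lam) (O ⧸ (IsLocalRing.maximalIdeal O ^ 2)))).map (redRes O) * A = A * ((y : Matrix (JIdx l c lam) (JIdx l c lam) (O ⧸ (IsLocalRing.maximalIdeal O ^ 2)))).map (redRes O) := by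
      have h := congrArg (fun M : Matrix (JIdx l c lam) (JIdx l c lam) (O ⧸ (IsLocalRing.maximalIdeal O ^ 2)) => M.map (redRes O)) hy
      simpa only [Matrix.map_mul, hsA] using h
    have hP : P = ((y : Matrix (JIdx l c lam) (JIdx l c lam) (O ⧸ (IsLocalRing.maximalIdeal O ^ 2)))).map (redRes O) := by
      rw [hPdef, hwdef, Units.val_mul, Matrix.map_mul, hxone, one_mul]
    have hPA : A * P = P * A := by rw [hP]; exact hyA.symm
    have hcval : ((w * z * w⁻¹ : GL (JIdx l c lam) (O ⧸ (IsLocalRing.maximalIdeal O ^ 2))) : Matrix (JIdx l c lam) (JIdx l c lam) (O ⧸ (IsLocalRing.maximalIdeal O ^ 2))) =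
        1 + π • ((w : Matrix (JIdx l c lam) (JIdx l c lam) (O ⧸ (IsLocalRing.maximalIdeal O ^ 2))) * Y * ((w⁻¹ : GL (JIdx l c lam) (O ⧸ (IsLocalRing.maximalIdeal O ^ 2))) : Matrix (JIdx l c lam) (JIdx l c lam) (O ⧸ (IsLocalRing.maximalIdeal O ^ 2)))) := by
      rw [Units.val_mul, Units.val_mul, hY]
      exact hconj w Y
    have h3 := hθ ⟨w * z * w⁻¹, (MonoidHom.normal_ker _).conj_mem z hz w⟩ _ hcval
    have h4 : ((w : Matrix (JIdx l c lam) (JIdx l c lam) (O ⧸ (IsLocalRing.maximalIdeal O ^ 2))) * Y * ((w⁻¹ : GL (JIdx l c lam) (O ⧸ (IsLocalRing.maximalIdeal O ^ 2))) : Matrix (JIdx l c lam) (JIdx l c lam) (O ⧸ (IsLocalRing.maximalIdeal O ^ 2)))).map (redRes O) =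
        P * Y.map (redRes O) * Q := by
      rw [Matrix.map_mul, Matrix.map_mul, ← hPdef, ← hQdef]
    have h5 : Matrix.trace (A * (P * Y.map (redRes O) * Q)) = Matrix.trace (A * Y.map (redRes O)) := by
      have e1 : A * (P * Y.map (redRes O) * Q) = (A * P) * Y.map (redRes O) * Q := by
        simp only [mul_assoc]
      rw [e1, Matrix.trace_mul_cycle (A * P) (Y.map (redRes O)) Q]
      have e2 : Q * (A * P) * Y.map (redRes O) = A * Y.map (redRes O) := by
        rw [hPA, ← mul_assoc Q P A, hQP, one_mul]
      rw [e2]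
    have h6 : θ ⟨z, hz⟩ = ψ (Matrix.trace (A * Y.map (redRes O))) := hθ ⟨z, hz⟩ Y hY
    rw [h3, h4, h5, h6]
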